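/- Let m, d be positive integers with e · 2md · (3/4)^m ≤ 1 (where e is Euler's number). Then every system of m acyclic simple graphs (forests) F_1, …, F_m on the same finite vertex set V, each of maximum degree at most d, has a cooperative coloring. -/

import Mathlib

set_option linter.unusedSectionVars false
set_option linter.unusedVariables false



/-- A set of vertices is independent in the graph `G`:
no two of its vertices are adjacent. -/
def IndepIn {V : Type*} (G : SimpleGraph V) (I : Set V) : Prop :=
  ∀ ⦃u⦄, u ∈ I → ∀ ⦃v⦄, v ∈ I → ¬ G.Adj u v

/-- `(I j)` is a cooperative coloring for the system `G` of graphs: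
each `I j` is independent in `G j` and the sets `I j` cover all vertices. -/
def IsCoopColoring {V : Type*} {m : ℕ} (G : Fin m → SimpleGraph V)
    (I : Fin m → Set V) : Prop :=
  (∀ j, IndepIn (G j) (I j)) ∧ (⋃ j, I j) = Set.univ

/-- The system `G` of graphs has a cooperative coloring. -/
def HasCoopColoring {V : Type*} {m : ℕ} (G : Fin m → SimpleGraph V) : Prop :=
  ∃ I : Fin m → Set V, IsCoopColoring G I

/-- The maximum degree of a graph on a finite vertex set. -/
noncomputable def maxDeg {V : Type*} [Fintype V] (G : SimpleGraph V) : ℕ :=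
  Finset.univ.sup fun v => (G.neighborSet v).ncard

open Finset

namespace CoopLLL

variable {κ : Type*} [Fintype κ] [DecidableEq κ]

/-- `E` is determined by the coordinates in `S`. -/
def DetBy (E : Finset (κ → Bool)) (S : Finset κ) : Prop :=
  ∀ ⦃ω ω' : κ → Bool⦄, (∀ i ∈ S, ω i = ω' i) → ω ∈ E → ω' ∈ E

lemma DetBy.mono {E : Finset (κ → Bool)} {S T : Finset κ} (h : DetBy E S) (hST : S ⊆ T) :
    DetBy E T := fun ω ω' hag => h (fun i hi => hag i (hST hi))

/-- Combine two outcomes: take `ω` on `S` and `ω'` off `S`. -/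
noncomputable def comb (S : Finset κ) (ω ω' : κ → Bool) : κ → Bool :=
  fun i => if i ∈ S then ω i else ω' i

lemma comb_mem_left {E : Finset (κ → Bool)} {S : Finset κ} (hE : DetBy E S)
    {ω : κ → Bool} (hω : ω ∈ E) (ω' : κ → Bool) : comb S ω ω' ∈ E :=
  hE (fun i hi => by simp [comb, hi]) hω

lemma comb_mem_right {E : Finset (κ → Bool)} {S : Finset κ} (hE : DetBy E Sᶜ)
    {ω' : κ → Bool} (hω' : ω' ∈ E) (ω : κ → Bool) : comb S ω ω' ∈ E :=
  hE (fun i hi => by simp only [Finset.mem_compl] at hi; simp [comb, hi]) hω'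

lemma comb_comb (S : Finset κ) (ω ω' : κ → Bool) :
    comb S (comb S ω ω') (comb S ω' ω) = ω := by
  funext i; by_cases hi : i ∈ S <;> simp [comb, hi]

/-- Independence: if `E` is determined by `S` and `F` is determined by `Sᶜ`, then
`|E ∩ F| ⬝ |Ω| = |E| ⬝ |F|`. -/
lemma card_inter_mul {E F : Finset (κ → Bool)} {S : Finset κ}
    (hE : DetBy E S) (hF : DetBy F Sᶜ) :
    ((E ∩ F).card : ℝ) * (Fintype.card (κ → Bool) : ℝ) = (E.card : ℝ) * F.card := by
  have key : ((E ∩ F) ×ˢ (Finset.univ : Finset (κ → Bool))).card = (E ×ˢ F).card := by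
    apply Finset.card_bij' (fun p _ => (comb S p.1 p.2, comb S p.2 p.1))
      (fun p _ => (comb S p.1 p.2, comb S p.2 p.1))
    · rintro ⟨g, w⟩ hp
      simp only [Finset.mem_product, Finset.mem_inter] at hp ⊢
      exact ⟨comb_mem_left hE hp.1.1 w, comb_mem_right hF hp.1.2 w⟩
    · rintro ⟨e, f⟩ hp
      simp only [Finset.mem_product, Finset.mem_inter] at hp ⊢
      exact ⟨⟨comb_mem_left hE hp.1 f, comb_mem_right hF hp.2 e⟩, Finset.mem_univ _⟩
    · rintro ⟨g, w⟩ _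
      simp [comb_comb]
    · rintro ⟨e, f⟩ _
      simp [comb_comb]
  rw [Finset.card_product, Finset.card_product, Finset.card_univ] at key
  exact_mod_cast key

end CoopLLL

namespace CoopLLL

section LLL

variable {κ : Type*} [Fintype κ] [DecidableEq κ]
variable {α : Type*} [Fintype α] [DecidableEq α]
variable (A : α → Finset (κ → Bool)) (vbl : α → Finset κ)

/-- The outcomes avoiding all bad events indexed by `S`. -/
noncomputable def NS (S : Finset α) : Finset (κ → Bool) :=
  @Finset.filter _ (fun ω => ∀ a ∈ S, ω ∉ A a) (Classical.decPred _) Finset.univ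

lemma mem_NS {S : Finset α} {ω : κ → Bool} : ω ∈ NS A S ↔ ∀ a ∈ S, ω ∉ A a := by
  simp [NS]

lemma NS_anti {S T : Finset α} (h : S ⊆ T) : NS A T ⊆ NS A S := by
  intro ω hω
  rw [mem_NS] at hω ⊢
  exact fun a ha => hω a (h ha)

lemma NS_empty : NS A (∅ : Finset α) = Finset.univ := by
  ext ω; simp [mem_NS]

lemma NS_insert (a : α) (S : Finset α) : NS A (insert a S) = NS A S \ A a := by
  ext ω
  simp only [mem_NS, Finset.mem_sdiff, Finset.mem_insert]
  constructor
  · intro h; exact ⟨fun b hb => h b (Or.inr hb), h a (Or.inl rfl)⟩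
  · rintro ⟨h1, h2⟩ b (rfl | hb)
    · exact h2
    · exact h1 b hb

lemma card_NS_insert (a : α) (S : Finset α) :
    ((NS A (insert a S)).card : ℝ) = (NS A S).card - ((A a ∩ NS A S).card : ℝ) := by
  rw [NS_insert]
  have h := Finset.card_sdiff_add_card_inter (NS A S) (A a)
  have : (A a ∩ NS A S) = (NS A S ∩ A a) := Finset.inter_comm _ _
  rw [this]
  push_cast [← h]
  ring

lemma detBy_NS (hdet : ∀ a, DetBy (A a) (vbl a)) {S : Finset α} {T : Finset κ}
    (h : ∀ a ∈ S, vbl a ⊆ T) : DetBy (NS A S) T := by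
  intro ω ω' hag hω
  rw [mem_NS] at hω ⊢
  intro a ha hmem
  exact hω a ha (hdet a (fun i hi => (hag i (h a ha hi)).symm) hmem)

variable {A vbl}

/-- Core induction of the symmetric local lemma. -/
lemma lll_main (hdet : ∀ a, DetBy (A a) (vbl a)) {x : ℝ} (hx0 : 0 < x) (hx1 : x < 1)
    {D : ℕ}
    (hcard : ∀ a, ((A a).card : ℝ) ≤ x * (1 - x) ^ D * Fintype.card (κ → Bool))
    (hdep : ∀ a : α,
      ((Finset.univ.filter (fun b => b ≠ a ∧ ¬ Disjoint (vbl a) (vbl b))).card ≤ D)) :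
    ∀ n : ℕ, ∀ S : Finset α, S.card ≤ n → ∀ a, a ∉ S →
      ((A a ∩ NS A S).card : ℝ) ≤ x * (NS A S).card := by
  classical
  have hΩpos : (0 : ℝ) < Fintype.card (κ → Bool) := by
    have : 0 < Fintype.card (κ → Bool) := Fintype.card_pos
    exact_mod_cast this
  have h1x0 : (0:ℝ) ≤ 1 - x := by linarith
  have h1x1 : (1:ℝ) - x ≤ 1 := by linarith
  intro n
  induction n with
  | zero =>
    intro S hS a _
    have hS' : S = ∅ := Finset.card_eq_zero.mp (Nat.le_zero.mp hS)
    subst hS'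
    rw [NS_empty]
    calc ((A a ∩ Finset.univ).card : ℝ) = (A a).card := by rw [Finset.inter_univ]
      _ ≤ x * (1 - x) ^ D * Fintype.card (κ → Bool) := hcard a
      _ ≤ x * 1 * Fintype.card (κ → Bool) := by
          apply mul_le_mul_of_nonneg_right _ (le_of_lt hΩpos)
          apply mul_le_mul_of_nonneg_left _ (le_of_lt hx0)
          exact pow_le_one₀ h1x0 h1x1
      _ = x * (Finset.univ : Finset (κ → Bool)).card := by
          rw [Finset.card_univ]; ring
  | succ n IH =>
    intro S hS a ha
    set S1 := S.filter (fun b => ¬ Disjoint (vbl a) (vbl b)) with hS1def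
    set S2 := S.filter (fun b => Disjoint (vbl a) (vbl b)) with hS2def
    have hS2S1 : S2 ∪ S1 = S := by
      rw [hS1def, hS2def, Finset.filter_union_filter_not_eq]
    have hdisj12 : Disjoint S2 S1 := by
      rw [hS1def, hS2def]
      exact (Finset.disjoint_filter_filter_not S S _)
    -- independence step
    have hNS2det : DetBy (NS A S2) (vbl a)ᶜ := by
      apply detBy_NS A vbl hdet
      intro b hb i hi
      rw [Finset.mem_compl]
      rw [hS2def, Finset.mem_filter] at hb
      exact Finset.disjoint_right.mp hb.2 hi
    have hindep : ((A a ∩ NS A S2).card : ℝ) * Fintype.card (κ → Bool)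
        = (A a).card * (NS A S2).card := card_inter_mul (hdet a) hNS2det
    -- chain step
    have hchain : ∀ T : Finset α, T ⊆ S1 →
        ((1 - x) ^ T.card * ((NS A S2).card : ℝ)) ≤ (NS A (S2 ∪ T)).card := by
      intro T
      induction T using Finset.induction_on with
      | empty => intro _; simp
      | @insert u T hu IHT =>
        intro hsub
        have huS1 : u ∈ S1 := hsub (Finset.mem_insert_self u T)
        have hTsub : T ⊆ S1 := fun b hb => hsub (Finset.mem_insert_of_mem hb)
        have huW : u ∉ S2 ∪ T := by
          intro hmem
          rcases Finset.mem_union.mp hmem with h' | h'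
          · exact (Finset.disjoint_left.mp hdisj12 h') huS1
          · exact hu h'
        have hcardW : (S2 ∪ T).card ≤ n := by
          have h1 : (S2 ∪ T).card ≤ S2.card + T.card := Finset.card_union_le _ _
          have h2 : T.card ≤ S1.card - 1 := by
            have : T ⊆ S1.erase u := fun b hb =>
              Finset.mem_erase.mpr ⟨fun hbu => hu (hbu ▸ hb), hTsub hb⟩
            calc T.card ≤ (S1.erase u).card := Finset.card_le_card this
              _ = S1.card - 1 := Finset.card_erase_of_mem huS1
          have h3 : S2.card + S1.card = S.card := by
            rw [← hS2S1]
            exact (Finset.card_union_of_disjoint hdisj12).symm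
          have hS1pos : 1 ≤ S1.card := Finset.card_pos.mpr ⟨u, huS1⟩
          omega
        have hstep := IH (S2 ∪ T) hcardW u huW
        have heq : S2 ∪ insert u T = insert u (S2 ∪ T) := by
          rw [Finset.union_insert]
        rw [heq, card_NS_insert]
        have hNSpos : (0:ℝ) ≤ ((NS A (S2 ∪ T)).card : ℝ) := Nat.cast_nonneg _
        have hT := IHT hTsub
        calc (1 - x) ^ (insert u T).card * ((NS A S2).card : ℝ)
            = (1 - x) * ((1 - x) ^ T.card * (NS A S2).card) := by
              rw [Finset.card_insert_of_notMem hu]; ring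
          _ ≤ (1 - x) * (NS A (S2 ∪ T)).card := by
              apply mul_le_mul_of_nonneg_left hT h1x0
          _ ≤ (NS A (S2 ∪ T)).card - ((A u ∩ NS A (S2 ∪ T)).card : ℝ) := by
              nlinarith [hstep]
    -- sizes
    have hS1card : S1.card ≤ D := by
      refine le_trans (Finset.card_le_card ?_) (hdep a)
      intro b hb
      rw [hS1def, Finset.mem_filter] at hb
      refine Finset.mem_filter.mpr ⟨Finset.mem_univ _, ?_, hb.2⟩
      intro hba; exact ha (hba ▸ hb.1)
    -- combine
    have hfinal : ((A a ∩ NS A S).card : ℝ) ≤ (A a ∩ NS A S2).card := by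
      exact_mod_cast Finset.card_le_card
        (Finset.inter_subset_inter le_rfl (NS_anti A (hS2S1 ▸ Finset.subset_union_left)))
    have hAa : ((A a ∩ NS A S2).card : ℝ)
        ≤ x * (1 - x) ^ D * ((NS A S2).card : ℝ) := by
      have hN : (0:ℝ) ≤ ((NS A S2).card : ℝ) := Nat.cast_nonneg _
      have h2 : ((A a ∩ NS A S2).card : ℝ) * Fintype.card (κ → Bool)
          ≤ (x * (1 - x) ^ D * Fintype.card (κ → Bool)) * (NS A S2).card := by
        rw [hindep]
        exact mul_le_mul_of_nonneg_right (hcard a) hN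
      have := le_of_mul_le_mul_right (by linarith : ((A a ∩ NS A S2).card : ℝ) * Fintype.card (κ → Bool) ≤ (x * (1 - x) ^ D * (NS A S2).card) * Fintype.card (κ → Bool)) hΩpos
      linarith
    have hpow : (1 - x) ^ D ≤ (1 - x) ^ S1.card :=
      pow_le_pow_of_le_one h1x0 h1x1 hS1card
    calc ((A a ∩ NS A S).card : ℝ) ≤ (A a ∩ NS A S2).card := hfinal
      _ ≤ x * (1 - x) ^ D * ((NS A S2).card : ℝ) := hAa
      _ ≤ x * ((1 - x) ^ S1.card * ((NS A S2).card : ℝ)) := by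
          have hN : (0:ℝ) ≤ ((NS A S2).card : ℝ) := Nat.cast_nonneg _
          have := mul_le_mul_of_nonneg_right hpow hN
          nlinarith
      _ ≤ x * (NS A (S2 ∪ S1)).card := by
          apply mul_le_mul_of_nonneg_left (hchain S1 le_rfl) (le_of_lt hx0)
      _ = x * (NS A S).card := by rw [hS2S1]

/-- Symmetric local lemma: there is an outcome avoiding all the bad events. -/
lemma lll_exists (hdet : ∀ a, DetBy (A a) (vbl a)) {x : ℝ} (hx0 : 0 < x) (hx1 : x < 1)
    {D : ℕ}
    (hcard : ∀ a, ((A a).card : ℝ) ≤ x * (1 - x) ^ D * Fintype.card (κ → Bool))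
    (hdep : ∀ a : α,
      ((Finset.univ.filter (fun b => b ≠ a ∧ ¬ Disjoint (vbl a) (vbl b))).card ≤ D)) :
    ∃ ω : κ → Bool, ∀ a, ω ∉ A a := by
  classical
  have h1x0 : (0:ℝ) < 1 - x := by linarith
  have hΩpos : (0 : ℝ) < Fintype.card (κ → Bool) := by
    have : 0 < Fintype.card (κ → Bool) := Fintype.card_pos
    exact_mod_cast this
  have hchain : ∀ S : Finset α, ((1 - x) ^ S.card * (Fintype.card (κ → Bool) : ℝ)) ≤ (NS A S).card := by
    intro S
    induction S using Finset.induction_on with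
    | empty => simp [NS_empty]
    | @insert u T hu IHT =>
      have hstep := lll_main hdet hx0 hx1 hcard hdep T.card T le_rfl u hu
      rw [card_NS_insert, Finset.card_insert_of_notMem hu]
      calc (1 - x) ^ (T.card + 1) * (Fintype.card (κ → Bool) : ℝ)
          = (1 - x) * ((1 - x) ^ T.card * Fintype.card (κ → Bool)) := by ring
        _ ≤ (1 - x) * (NS A T).card := mul_le_mul_of_nonneg_left IHT (le_of_lt h1x0)
        _ ≤ (NS A T).card - ((A u ∩ NS A T).card : ℝ) := by nlinarith [hstep]
  have hpos : (0:ℝ) < (NS A (Finset.univ : Finset α)).card := by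
    refine lt_of_lt_of_le ?_ (hchain Finset.univ)
    positivity
  have hne : (NS A (Finset.univ : Finset α)).Nonempty := by
    rw [← Finset.card_pos]
    exact_mod_cast hpos
  obtain ⟨ω, hω⟩ := hne
  exact ⟨ω, fun a => (mem_NS A).mp hω a (Finset.mem_univ a)⟩

end LLL

end CoopLLL

namespace CoopLLL

section Counting

variable {κ : Type*} [Fintype κ] [DecidableEq κ]

/-- The event (as a finset of outcomes) that `p` holds. -/
noncomputable def Ev (p : (κ → Bool) → Prop) : Finset (κ → Bool) :=
  @Finset.filter _ p (Classical.decPred _) Finset.univ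

lemma mem_Ev {p : (κ → Bool) → Prop} {b : κ → Bool} : b ∈ Ev p ↔ p b := by
  simp [Ev]

lemma Ev_congr {p q : (κ → Bool) → Prop} (h : ∀ b, p b ↔ q b) : Ev p = Ev q := by
  ext b; rw [mem_Ev, mem_Ev]; exact h b

lemma Ev_true : (Ev (fun _ : κ → Bool => True)).card = Fintype.card (κ → Bool) := by
  rw [← Finset.card_univ]
  congr 1
  ext b; simp [mem_Ev]

lemma Ev_split (p q : (κ → Bool) → Prop) :
    (Ev fun b => p b ∧ q b).card + (Ev fun b => p b ∧ ¬ q b).card = (Ev p).card := by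
  classical
  have hdisj : Disjoint (Ev fun b => p b ∧ q b) (Ev fun b => p b ∧ ¬ q b) := by
    rw [Finset.disjoint_left]
    intro b h1 h2
    rw [mem_Ev] at h1 h2
    exact h2.2 h1.2
  rw [← Finset.card_union_of_disjoint hdisj]
  congr 1
  ext b
  simp only [Finset.mem_union, mem_Ev]
  by_cases hq : q b <;> tauto

lemma Ev_card_flip (c : κ) (p : (κ → Bool) → Prop) :
    (Ev p).card = (Ev fun b => p (Function.update b c (!(b c)))).card := by
  have hinv : ∀ b : κ → Bool,
      Function.update (Function.update b c (!(b c))) c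
        (!(Function.update b c (!(b c)) c)) = b := by
    intro b
    funext i
    by_cases hi : i = c
    · subst hi; simp
    · simp [Function.update_of_ne hi]
  apply Finset.card_bij' (fun b _ => Function.update b c (!(b c)))
    (fun b _ => Function.update b c (!(b c)))
  · intro b _; exact hinv b
  · intro b _; exact hinv b
  · -- hi : image of first map lands in target
    intro b hb
    rw [mem_Ev] at hb ⊢
    rw [hinv b]
    exact hb
  · -- hj
    intro b hb
    rw [mem_Ev] at hb ⊢
    exact hb

lemma Ev_coord_card (c : κ) (y : Bool) :
    2 * (Ev fun b : κ → Bool => b c = y).card = Fintype.card (κ → Bool) := by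
  have hflip := Ev_card_flip c (fun b : κ → Bool => b c = y)
  have h1 : (Ev fun b : κ → Bool => (Function.update b c (!(b c))) c = y)
      = (Ev fun b : κ → Bool => b c = (!y)) := by
    apply Ev_congr
    intro b
    rw [Function.update_self]
    cases h : b c <;> cases y <;> simp
  rw [h1] at hflip
  have hsplit := Ev_split (fun _ : κ → Bool => True) (fun b => b c = y)
  rw [Ev_true] at hsplit
  have h2 : (Ev fun b : κ → Bool => True ∧ b c = y) = (Ev fun b : κ → Bool => b c = y) :=
    Ev_congr (fun b => by tauto)
  have h3 : (Ev fun b : κ → Bool => True ∧ ¬ (b c = y)) = (Ev fun b : κ → Bool => b c = (!y)) :=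
    Ev_congr (fun b => by cases h : b c <;> cases y <;> simp)
  rw [h2, h3] at hsplit
  linarith

lemma Ev_coord_pair_card (c1 c2 : κ) (hne : c1 ≠ c2) (y1 y2 : Bool) :
    4 * (Ev fun b : κ → Bool => b c1 = y1 ∧ b c2 = y2).card = Fintype.card (κ → Bool) := by
  have hflip := Ev_card_flip c2 (fun b : κ → Bool => b c1 = y1 ∧ b c2 = y2)
  have h1 : (Ev fun b : κ → Bool =>
        (Function.update b c2 (!(b c2))) c1 = y1 ∧ (Function.update b c2 (!(b c2))) c2 = y2)
      = (Ev fun b : κ → Bool => b c1 = y1 ∧ b c2 = (!y2)) := by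
    apply Ev_congr
    intro b
    rw [Function.update_of_ne hne, Function.update_self]
    constructor
    · rintro ⟨ha, hb⟩; exact ⟨ha, by cases h : b c2 <;> cases y2 <;> simp_all⟩
    · rintro ⟨ha, hb⟩; exact ⟨ha, by cases h : b c2 <;> cases y2 <;> simp_all⟩
  rw [h1] at hflip
  have hsplit := Ev_split (fun b : κ → Bool => b c1 = y1) (fun b => b c2 = y2)
  have h3 : (Ev fun b : κ → Bool => b c1 = y1 ∧ ¬ (b c2 = y2))
      = (Ev fun b : κ → Bool => b c1 = y1 ∧ b c2 = (!y2)) :=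
    Ev_congr (fun b => by
      constructor
      · rintro ⟨ha, hb⟩; exact ⟨ha, by cases h : b c2 <;> cases y2 <;> simp_all⟩
      · rintro ⟨ha, hb⟩; exact ⟨ha, by cases h : b c2 <;> cases y2 <;> simp_all⟩)
  rw [h3, ← hflip] at hsplit
  have hc := Ev_coord_card c1 y1
  linarith

lemma Ev_detBy (p : (κ → Bool) → Prop) (S : Finset κ)
    (h : ∀ ω ω' : κ → Bool, (∀ i ∈ S, ω i = ω' i) → p ω → p ω') : DetBy (Ev p) S := by
  intro ω ω' hag hω
  rw [mem_Ev] at hω ⊢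
  exact h ω ω' hag hω

end Counting

end CoopLLL

namespace CoopLLL

section Product

variable {κ : Type*} [Fintype κ] [DecidableEq κ] {ι : Type*} [DecidableEq ι]

lemma card_Ev_inter_eq (B : ι → Finset (κ → Bool)) (T : ι → Finset κ)
    (hdet : ∀ i, DetBy (B i) (T i)) (t : Finset ι)
    (hdisj : ∀ i ∈ t, ∀ j ∈ t, i ≠ j → Disjoint (T i) (T j)) :
    ((Ev fun b => ∀ i ∈ t, b ∈ B i).card : ℝ) * (Fintype.card (κ → Bool) : ℝ) ^ t.card
      = (∏ i ∈ t, ((B i).card : ℝ)) * Fintype.card (κ → Bool) := by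
  classical
  induction t using Finset.induction_on with
  | empty =>
    have h0 : (Ev fun b : κ → Bool => ∀ i ∈ (∅ : Finset ι), b ∈ B i)
        = (Ev fun _ : κ → Bool => True) := Ev_congr (by simp)
    rw [h0]
    rw [Ev_true]
    simp
  | @insert i t hi IH =>
    have hdisj' : ∀ i' ∈ t, ∀ j ∈ t, i' ≠ j → Disjoint (T i') (T j) := by
      intro a ha b hb hab
      exact hdisj a (Finset.mem_insert_of_mem ha) b (Finset.mem_insert_of_mem hb) hab
    have hsplit : (Ev fun b : κ → Bool => ∀ j ∈ insert i t, b ∈ B j)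
        = B i ∩ (Ev fun b : κ → Bool => ∀ j ∈ t, b ∈ B j) := by
      ext b
      simp only [mem_Ev, Finset.mem_inter, Finset.forall_mem_insert, mem_Ev]
    have hdetF : DetBy (Ev fun b : κ → Bool => ∀ j ∈ t, b ∈ B j) (T i)ᶜ := by
      apply Ev_detBy
      intro ω ω' hag hω j hj
      refine hdet j (fun c hc => hag c ?_) (hω j hj)
      rw [Finset.mem_compl]
      have hd := hdisj j (Finset.mem_insert_of_mem hj) i (Finset.mem_insert_self i t)
        (fun hji => hi (hji ▸ hj))
      exact fun hci => Finset.disjoint_left.mp hd hc hci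
    have hind := card_inter_mul (hdet i) hdetF
    rw [hsplit, Finset.card_insert_of_notMem hi, Finset.prod_insert hi]
    have hIH := IH hdisj'
    set N : ℝ := (Fintype.card (κ → Bool) : ℝ) with hN
    set C := ((B i ∩ Ev fun b : κ → Bool => ∀ j ∈ t, b ∈ B j).card : ℝ)
    set Et := ((Ev fun b : κ → Bool => ∀ j ∈ t, b ∈ B j).card : ℝ)
    calc C * N ^ (t.card + 1) = (C * N) * N ^ t.card := by ring
      _ = (((B i).card : ℝ) * Et) * N ^ t.card := by rw [hind]
      _ = ((B i).card : ℝ) * (Et * N ^ t.card) := by ring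
      _ = ((B i).card : ℝ) * ((∏ j ∈ t, ((B j).card : ℝ)) * N) := by rw [hIH]
      _ = (((B i).card : ℝ) * ∏ j ∈ t, ((B j).card : ℝ)) * N := by ring

lemma card_Ev_inter_le (B : ι → Finset (κ → Bool)) (T : ι → Finset κ)
    (hdet : ∀ i, DetBy (B i) (T i)) (t : Finset ι)
    (hdisj : ∀ i ∈ t, ∀ j ∈ t, i ≠ j → Disjoint (T i) (T j))
    {q : ℝ} (hq0 : 0 ≤ q)
    (hB : ∀ i ∈ t, ((B i).card : ℝ) ≤ q * Fintype.card (κ → Bool)) :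
    ((Ev fun b => ∀ i ∈ t, b ∈ B i).card : ℝ)
      ≤ q ^ t.card * Fintype.card (κ → Bool) := by
  have heq := card_Ev_inter_eq B T hdet t hdisj
  set N : ℝ := (Fintype.card (κ → Bool) : ℝ) with hN
  have hNpos : 0 < N := by
    rw [hN]; exact_mod_cast Fintype.card_pos
  have hprod : (∏ i ∈ t, ((B i).card : ℝ)) ≤ ∏ i ∈ t, (q * N) := by
    apply Finset.prod_le_prod
    · intro i _; positivity
    · exact hB
  have hqN : ∏ i ∈ t, (q * N) = q ^ t.card * N ^ t.card := by
    rw [Finset.prod_const, mul_pow]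
  have hNk : (0:ℝ) < N ^ t.card := pow_pos hNpos _
  have : ((Ev fun b => ∀ i ∈ t, b ∈ B i).card : ℝ) * N ^ t.card
      ≤ (q ^ t.card * N) * N ^ t.card := by
    rw [heq]
    calc (∏ i ∈ t, ((B i).card : ℝ)) * N ≤ (q ^ t.card * N ^ t.card) * N := by
          apply mul_le_mul_of_nonneg_right _ (le_of_lt hNpos)
          exact le_trans hprod (le_of_eq hqN)
      _ = (q ^ t.card * N) * N ^ t.card := by ring
  exact le_of_mul_le_mul_right this hNk

end Product

end CoopLLL
namespace CoopLLL

open SimpleGraph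

section Forest

open scoped Classical

variable {V : Type*} (G : SimpleGraph V)

/-- A root for the component of `v`. -/
noncomputable def groot (v : V) : V := (G.connectedComponentMk v).out

lemma groot_reachable (v : V) : G.Reachable v (groot G v) := by
  have h : G.connectedComponentMk ((G.connectedComponentMk v).out) = G.connectedComponentMk v :=
    (G.connectedComponentMk v).out_eq
  exact (ConnectedComponent.exact h).symm

lemma groot_eq_of_adj {u v : V} (h : G.Adj u v) : groot G u = groot G v := by
  unfold groot
  rw [ConnectedComponent.connectedComponentMk_eq_of_adj h]

lemma exists_closer {v r : V} (hreach : G.Reachable v r) (h : 0 < G.dist v r) :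
    ∃ u, G.Adj v u ∧ G.dist u r + 1 = G.dist v r := by
  obtain ⟨w, hw⟩ := hreach.exists_walk_length_eq_dist
  cases w with
  | nil => simp at hw h
  | cons hadj w' =>
    rename_i u
    have hle : G.dist u r ≤ w'.length := dist_le w'
    have hlen : w'.length + 1 = G.dist v r := by simpa using hw
    have hreachu : G.Reachable u r := ⟨w'⟩
    obtain ⟨s, hs⟩ := hreachu.exists_walk_length_eq_dist
    have hge : G.dist v r ≤ G.dist u r + 1 := by
      have := dist_le (Walk.cons hadj s)
      simpa [hs] using this
    exact ⟨u, hadj, by omega⟩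

/-- The parent of `v`: an adjacent vertex one step closer to the root, if any. -/
noncomputable def gparent (v : V) : Option V :=
  if h : ∃ u, G.Adj v u ∧ G.dist u (groot G v) + 1 = G.dist v (groot G v)
  then some h.choose else none

lemma gparent_spec {v u : V} (h : gparent G v = some u) :
    G.Adj v u ∧ G.dist u (groot G v) + 1 = G.dist v (groot G v) := by
  by_cases hex : ∃ u, G.Adj v u ∧ G.dist u (groot G v) + 1 = G.dist v (groot G v)
  · unfold gparent at h
    rw [dif_pos hex] at h
    have heq : hex.choose = u := Option.some.inj h
    rw [← heq]
    exact hex.choose_spec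
  · unfold gparent at h
    rw [dif_neg hex] at h
    exact absurd h (by simp)

lemma gparent_adj {v u : V} (h : gparent G v = some u) : G.Adj v u :=
  (gparent_spec G h).1

lemma gparent_isSome_of_dist_pos {v : V} (h : 0 < G.dist v (groot G v)) :
    ∃ u, gparent G v = some u := by
  have hex := exists_closer G (groot_reachable G v) h
  refine ⟨hex.choose, ?_⟩
  unfold gparent
  rw [dif_pos hex]

/-- In an acyclic graph, a vertex strictly farther from `r` is not on a shortest walk. -/
lemma not_mem_shortest_support {v u r : V} (w : G.Walk u r)
    (hw : w.length = G.dist u r) (hlt : w.length < G.dist v r) : v ∉ w.support := by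
  intro hv
  have hd := dist_le (w.dropUntil v hv)
  have hlen : (w.dropUntil v hv).length ≤ w.length := Walk.length_dropUntil_le w hv
  omega

/-- Uniqueness of the closer neighbor in an acyclic graph. -/
lemma closer_neighbor_unique (hG : G.IsAcyclic) {v r u1 u2 : V}
    (h1 : G.Adj v u1) (hd1 : G.dist u1 r + 1 = G.dist v r)
    (h2 : G.Adj v u2) (hd2 : G.dist u2 r + 1 = G.dist v r)
    (hreach1 : G.Reachable u1 r) (hreach2 : G.Reachable u2 r) : u1 = u2 := by
  obtain ⟨w1, hw1⟩ := hreach1.exists_walk_length_eq_dist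
  obtain ⟨w2, hw2⟩ := hreach2.exists_walk_length_eq_dist
  have hp1 : w1.IsPath := w1.isPath_of_length_eq_dist hw1
  have hp2 : w2.IsPath := w2.isPath_of_length_eq_dist hw2
  have hv1 : v ∉ w1.support := not_mem_shortest_support G w1 hw1 (by omega)
  have hv2 : v ∉ w2.support := not_mem_shortest_support G w2 hw2 (by omega)
  have hq1 : (Walk.cons h1 w1).IsPath := hp1.cons hv1
  have hq2 : (Walk.cons h2 w2).IsPath := hp2.cons hv2
  have := hG.path_unique ⟨Walk.cons h1 w1, hq1⟩ ⟨Walk.cons h2 w2, hq2⟩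
  have hwalk : (Walk.cons h1 w1) = (Walk.cons h2 w2) := congrArg Subtype.val this
  have := congrArg (fun p => p.getVert 1) hwalk
  simpa [Walk.getVert_cons_succ, Walk.getVert_zero] using this

/-- In an acyclic graph, every edge is oriented by `gparent`. -/
lemma gparent_total (hG : G.IsAcyclic) {u v : V} (h : G.Adj u v) :
    gparent G u = some v ∨ gparent G v = some u := by
  have hroot : groot G u = groot G v := groot_eq_of_adj G h
  set r := groot G u with hr
  have hru : G.Reachable u r := groot_reachable G u
  have hrv : G.Reachable v r := by rw [hroot]; exact groot_reachable G v
  set a := G.dist u r with ha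
  set b := G.dist v r with hb
  obtain ⟨wu, hwu⟩ := hru.exists_walk_length_eq_dist
  obtain ⟨wv, hwv⟩ := hrv.exists_walk_length_eq_dist
  have hab : a ≤ b + 1 := by
    have := dist_le (Walk.cons h wv)
    simpa [← hb, ← ha, hwv] using this
  have hba : b ≤ a + 1 := by
    have := dist_le (Walk.cons h.symm wu)
    simpa [← hb, ← ha, hwu] using this
  have hne : a ≠ b := by
    intro heq
    rcases Nat.eq_zero_or_pos a with h0 | hpos
    · have hu0 : u = r := (hru.dist_eq_zero_iff).mp (by omega)
      have hv0 : v = r := (hrv.dist_eq_zero_iff).mp (by omega)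
      rw [hu0, hv0] at h
      exact G.irrefl h
    · have hp : wu.IsPath := wu.isPath_of_length_eq_dist hwu
      by_cases hv : v ∈ wu.support
      · have hd := dist_le (wu.dropUntil v hv)
        have hsplit := congrArg Walk.length (wu.take_spec hv)
        rw [Walk.length_append] at hsplit
        have htake : (wu.takeUntil v hv).length = 0 := by omega
        have : u = v := Walk.eq_of_length_eq_zero htake
        exact G.ne_of_adj h this
      · have hq : (Walk.cons h.symm wu).IsPath := hp.cons hv
        have hpv : wv.IsPath := wv.isPath_of_length_eq_dist hwv
        have := hG.path_unique ⟨Walk.cons h.symm wu, hq⟩ ⟨wv, hpv⟩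
        have hlen := congrArg (fun p : G.Path v r => p.1.length) this
        simp only [Walk.length_cons] at hlen
        omega
  rcases Nat.lt_or_ge a b with hlt | hge
  · -- b = a + 1 : parent of v is u
    right
    have hbpos : 0 < G.dist v (groot G v) := by rw [← hroot, ← hb]; omega
    obtain ⟨u', hu'⟩ := gparent_isSome_of_dist_pos G hbpos
    have hspec := gparent_spec G hu'
    rw [← hroot, ← hb] at hspec
    have heq : u' = u := by
      apply closer_neighbor_unique G hG hspec.1 hspec.2 h.symm (by omega)
      · exact (hspec.1.reachable.symm).trans hrv
      · exact hru
    rw [heq] at hu'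
    exact hu'
  · -- a = b + 1 : parent of u is v
    left
    have hapos : 0 < G.dist u (groot G u) := by rw [← hr, ← ha]; omega
    obtain ⟨v', hv'⟩ := gparent_isSome_of_dist_pos G hapos
    have hspec := gparent_spec G hv'
    rw [← hr, ← ha] at hspec
    have heq : v' = v := by
      apply closer_neighbor_unique G hG hspec.1 hspec.2 h (by omega)
      · exact (hspec.1.reachable.symm).trans hru
      · exact hrv
    rw [heq] at hv'
    exact hv'

/-- A vertex cannot be its parent's parent. -/
lemma gparent_asymm {u v : V} (h1 : gparent G u = some v) (h2 : gparent G v = some u) :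
    False := by
  have hs1 := gparent_spec G h1
  have hs2 := gparent_spec G h2
  have hroot : groot G u = groot G v := groot_eq_of_adj G hs1.1
  rw [hroot] at hs1
  omega

end Forest

end CoopLLL

namespace CoopLLL

open SimpleGraph

section App

open scoped Classical

variable {V : Type*} [Fintype V] {m : ℕ}

/-- Vertex `v` is covered by forest `i` under outcome `b`. -/
def covP (F : Fin m → SimpleGraph V) (i : Fin m) (v : V) (b : V × Fin m → Bool) : Prop :=
  b (v, i) = true ∧ ∀ u, gparent (F i) v = some u → b (u, i) = false

/-- The coordinates that the event "`v` covered by `i`" depends on. -/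
noncomputable def Tvi (F : Fin m → SimpleGraph V) (i : Fin m) (v : V) : Finset (V × Fin m) :=
  (gparent (F i) v).elim {(v, i)} (fun u => {(v, i), (u, i)})

lemma mem_Tvi_snd {F : Fin m → SimpleGraph V} {i : Fin m} {v : V} {c : V × Fin m}
    (h : c ∈ Tvi F i v) : c.2 = i := by
  unfold Tvi at h
  cases hp : gparent (F i) v with
  | none => rw [hp] at h; simp at h; rw [h]
  | some u =>
    rw [hp] at h
    simp only [Option.elim_some, Finset.mem_insert, Finset.mem_singleton] at h
    rcases h with h | h <;> rw [h]

lemma mem_Tvi_fst {F : Fin m → SimpleGraph V} {i : Fin m} {v : V} {c : V × Fin m}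
    (h : c ∈ Tvi F i v) : c.1 = v ∨ gparent (F i) v = some c.1 := by
  unfold Tvi at h
  cases hp : gparent (F i) v with
  | none => rw [hp] at h; simp at h; left; rw [h]
  | some u =>
    rw [hp] at h
    simp only [Option.elim_some, Finset.mem_insert, Finset.mem_singleton] at h
    rcases h with h | h
    · left; rw [h]
    · right; rw [h]

lemma self_mem_Tvi {F : Fin m → SimpleGraph V} {i : Fin m} {v : V} :
    (v, i) ∈ Tvi F i v := by
  unfold Tvi
  cases hp : gparent (F i) v <;> simp

lemma parent_mem_Tvi {F : Fin m → SimpleGraph V} {i : Fin m} {v u : V}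
    (h : gparent (F i) v = some u) : (u, i) ∈ Tvi F i v := by
  unfold Tvi
  rw [h]
  simp

lemma Tvi_disjoint {F : Fin m → SimpleGraph V} {i j : Fin m} {v u : V} (hij : i ≠ j) :
    Disjoint (Tvi F i v) (Tvi F j u) := by
  rw [Finset.disjoint_left]
  intro c hc hc'
  exact hij ((mem_Tvi_snd hc).symm.trans (mem_Tvi_snd hc'))

/-- The bad event for vertex `v`: it is covered by no forest. -/
noncomputable def Abad (F : Fin m → SimpleGraph V) (v : V) : Finset (V × Fin m → Bool) :=
  Ev (fun b => ∀ i, ¬ covP F i v b)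

/-- The per-forest event that `v` is not covered by `i`. -/
noncomputable def Bev (F : Fin m → SimpleGraph V) (i : Fin m) (v : V) :
    Finset (V × Fin m → Bool) :=
  Ev (fun b => ¬ covP F i v b)

/-- All variables the bad event of `v` depends on. -/
noncomputable def vblF (F : Fin m → SimpleGraph V) (v : V) : Finset (V × Fin m) :=
  Finset.univ.biUnion (fun i => Tvi F i v)

lemma cov_agree {F : Fin m → SimpleGraph V} {i : Fin m} {v : V} {ω ω' : V × Fin m → Bool}
    (hag : ∀ c ∈ Tvi F i v, ω c = ω' c) (h : covP F i v ω') : covP F i v ω := by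
  constructor
  · rw [hag (v, i) self_mem_Tvi]
    exact h.1
  · intro u hu
    rw [hag (u, i) (parent_mem_Tvi hu)]
    exact h.2 u hu

lemma detBy_Bev {F : Fin m → SimpleGraph V} {i : Fin m} {v : V} :
    DetBy (Bev F i v) (Tvi F i v) := by
  apply Ev_detBy
  intro ω ω' hag hω hcov'
  exact hω (cov_agree (fun c hc => hag c hc) hcov')

lemma detBy_Abad {F : Fin m → SimpleGraph V} {v : V} :
    DetBy (Abad F v) (vblF F v) := by
  apply Ev_detBy
  intro ω ω' hag hω i hcov'
  refine hω i (cov_agree (fun c hc => hag c ?_) hcov')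
  exact Finset.mem_biUnion.mpr ⟨i, Finset.mem_univ i, hc⟩

lemma Abad_eq (F : Fin m → SimpleGraph V) (v : V) :
    Abad F v = Ev (fun b => ∀ i ∈ (Finset.univ : Finset (Fin m)), b ∈ Bev F i v) := by
  apply Ev_congr
  intro b
  simp only [Finset.mem_univ, true_implies]
  constructor
  · intro h i
    rw [Bev, mem_Ev]
    exact h i
  · intro h i
    have := h i
    rw [Bev, mem_Ev] at this
    exact this

lemma card_Bev_le {F : Fin m → SimpleGraph V} {i : Fin m} {v : V} :
    ((Bev F i v).card : ℝ) ≤ (3/4 : ℝ) * Fintype.card (V × Fin m → Bool) := by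
  set N : ℝ := (Fintype.card (V × Fin m → Bool) : ℝ) with hN
  have hsplit := Ev_split (fun _ : V × Fin m → Bool => True) (fun b => covP F i v b)
  rw [Ev_true] at hsplit
  have h1 : (Ev fun b : V × Fin m → Bool => True ∧ covP F i v b)
      = Ev (fun b => covP F i v b) := Ev_congr (fun b => by tauto)
  have h2 : (Ev fun b : V × Fin m → Bool => True ∧ ¬ covP F i v b) = Bev F i v :=
    Ev_congr (fun b => by tauto)
  rw [h1, h2] at hsplit
  cases hp : gparent (F i) v with
  | some u =>
    have hne : (v, i) ≠ (u, i) := by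
      intro hvu
      have : v = u := congrArg Prod.fst hvu
      exact (F i).ne_of_adj (gparent_adj _ hp) this
    have hcov : (Ev fun b : V × Fin m → Bool => covP F i v b)
        = Ev (fun b => b (v, i) = true ∧ b (u, i) = false) := by
      apply Ev_congr
      intro b
      constructor
      · rintro ⟨hb1, hb2⟩; exact ⟨hb1, hb2 u hp⟩
      · rintro ⟨hb1, hb2⟩
        refine ⟨hb1, fun u' hu' => ?_⟩
        rw [hp] at hu'
        rw [← Option.some.inj hu']
        exact hb2
    have hpair := Ev_coord_pair_card (v, i) (u, i) hne true false
    rw [hcov] at hsplit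
    have : 4 * ((Bev F i v).card : ℝ) ≤ 3 * N := by
      have h4 : (4 : ℝ) * (Ev fun b : V × Fin m → Bool =>
          b (v, i) = true ∧ b (u, i) = false).card = N := by rw [hN]; exact_mod_cast hpair
      have hs : ((Ev fun b : V × Fin m → Bool => b (v,i) = true ∧ b (u,i) = false).card : ℝ)
          + ((Bev F i v).card : ℝ) = N := by rw [hN]; exact_mod_cast hsplit
      linarith
    linarith
  | none =>
    have hcov : (Ev fun b : V × Fin m → Bool => covP F i v b)
        = Ev (fun b => b (v, i) = true) := by
      apply Ev_congr
      intro b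
      constructor
      · rintro ⟨hb1, _⟩; exact hb1
      · intro hb1
        refine ⟨hb1, fun u' hu' => ?_⟩
        rw [hp] at hu'
        exact absurd hu' (by simp)
    have hcoord := Ev_coord_card (v, i) true
    rw [hcov] at hsplit
    have h2' : (2 : ℝ) * (Ev fun b : V × Fin m → Bool => b (v,i) = true).card = N := by
      rw [hN]; exact_mod_cast hcoord
    have hs : ((Ev fun b : V × Fin m → Bool => b (v,i) = true).card : ℝ)
        + ((Bev F i v).card : ℝ) = N := by rw [hN]; exact_mod_cast hsplit
    have hNpos : (0:ℝ) ≤ N := by positivity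
    linarith

lemma card_Abad_le (F : Fin m → SimpleGraph V) (v : V) :
    ((Abad F v).card : ℝ) ≤ (3/4 : ℝ) ^ m * Fintype.card (V × Fin m → Bool) := by
  rw [Abad_eq]
  have := card_Ev_inter_le (fun i => Bev F i v) (fun i => Tvi F i v)
    (fun i => detBy_Bev) Finset.univ
    (fun i _ j _ hij => Tvi_disjoint hij)
    (by norm_num : (0:ℝ) ≤ 3/4)
    (fun i _ => card_Bev_le)
  simpa [Finset.card_univ] using this

end App

end CoopLLL

namespace CoopLLL

open SimpleGraph

section Dep

open scoped Classical

variable {V : Type*} [Fintype V] {m : ℕ}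

/-- Children of `v` in forest `i`. -/
noncomputable def childrenF (F : Fin m → SimpleGraph V) (i : Fin m) (v : V) : Finset V :=
  Finset.univ.filter (fun u => gparent (F i) u = some v)

lemma childrenF_subset {F : Fin m → SimpleGraph V} {i : Fin m} {v : V} :
    ↑(childrenF F i v) ⊆ (F i).neighborSet v := by
  intro u hu
  simp only [childrenF, Finset.coe_filter, Set.mem_setOf_eq] at hu
  exact ((gparent_adj _ hu.2).symm : (F i).Adj v u)

lemma card_le_of_subset_set {s : Finset V} {t : Set V} (h : ↑s ⊆ t) : s.card ≤ t.ncard := by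
  calc s.card = (↑s : Set V).ncard := (Set.ncard_coe_finset s).symm
    _ ≤ t.ncard := Set.ncard_le_ncard h (Set.toFinite t)

/-- The per-forest dependency set of `v`. -/
noncomputable def Ri (F : Fin m → SimpleGraph V) (i : Fin m) (v : V) : Finset V :=
  Finset.univ.filter (fun u => u ≠ v ∧ ¬ Disjoint (Tvi F i v) (Tvi F i u))

lemma mem_Ri_cases {F : Fin m → SimpleGraph V} {i : Fin m} {v u : V} (h : u ∈ Ri F i v) :
    u ≠ v ∧ (gparent (F i) v = some u ∨ gparent (F i) u = some v ∨
      ∃ w, gparent (F i) v = some w ∧ gparent (F i) u = some w) := by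
  simp only [Ri, Finset.mem_filter, Finset.mem_univ, true_and] at h
  obtain ⟨hne, hnd⟩ := h
  refine ⟨hne, ?_⟩
  obtain ⟨c, hcv, hcu⟩ := Finset.not_disjoint_iff.mp hnd
  rcases mem_Tvi_fst hcv with h1 | h1 <;> rcases mem_Tvi_fst hcu with h2 | h2
  · exact absurd (h2.symm.trans h1) hne
  · rw [h1] at h2
    exact Or.inr (Or.inl h2)
  · rw [h2] at h1
    exact Or.inl h1
  · exact Or.inr (Or.inr ⟨c.1, h1, h2⟩)

lemma Ri_card_le {F : Fin m → SimpleGraph V} {i : Fin m} {v : V} {d : ℕ}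
    (hd : ∀ w, ((F i).neighborSet w).ncard ≤ d) (hd1 : 1 ≤ d) :
    (Ri F i v).card ≤ 2 * d - 1 := by
  cases hp : gparent (F i) v with
  | none =>
    have hsub : Ri F i v ⊆ childrenF F i v := by
      intro u hu
      obtain ⟨hne, hcase⟩ := mem_Ri_cases hu
      rcases hcase with h1 | h1 | ⟨w, h1, _⟩
      · rw [hp] at h1; exact absurd h1 (by simp)
      · simp only [childrenF, Finset.mem_filter, Finset.mem_univ, true_and]; exact h1
      · rw [hp] at h1; exact absurd h1 (by simp)
    have := card_le_of_subset_set (childrenF_subset (F := F) (i := i) (v := v))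
    have hcard := Finset.card_le_card hsub
    have := hd v
    omega
  | some w =>
    have hvw : (F i).Adj v w := gparent_adj _ hp
    have hsub : Ri F i v ⊆ insert w (childrenF F i v ∪ (childrenF F i w).erase v) := by
      intro u hu
      obtain ⟨hne, hcase⟩ := mem_Ri_cases hu
      rcases hcase with h1 | h1 | ⟨w', h1, h2⟩
      · rw [hp] at h1
        exact Finset.mem_insert.mpr (Or.inl (Option.some.inj h1).symm)
      · refine Finset.mem_insert.mpr (Or.inr (Finset.mem_union_left _ ?_))
        simp only [childrenF, Finset.mem_filter, Finset.mem_univ, true_and]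
        exact h1
      · rw [hp] at h1
        have hww : w' = w := (Option.some.inj h1).symm
        subst hww
        refine Finset.mem_insert.mpr (Or.inr (Finset.mem_union_right _ ?_))
        refine Finset.mem_erase.mpr ⟨hne, ?_⟩
        simp only [childrenF, Finset.mem_filter, Finset.mem_univ, true_and]
        exact h2
    -- cardinality bounds
    have hchv : (childrenF F i v).card ≤ d - 1 := by
      have hsubv : ↑(childrenF F i v) ⊆ (F i).neighborSet v \ {w} := by
        intro u hu
        simp only [childrenF, Finset.coe_filter, Set.mem_setOf_eq] at hu
        refine ⟨((gparent_adj _ hu.2).symm : (F i).Adj v u), ?_⟩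
        intro huw
        rw [Set.mem_singleton_iff] at huw
        subst huw
        exact gparent_asymm (F i) hp hu.2
      have h1 := card_le_of_subset_set hsubv
      have h2 : ((F i).neighborSet v \ ({w} : Set V)).ncard
          = ((F i).neighborSet v).ncard - 1 :=
        Set.ncard_diff_singleton_of_mem hvw
      have := hd v
      omega
    have hchw : ((childrenF F i w).erase v).card ≤ d - 1 := by
      have hsubw : ↑((childrenF F i w).erase v) ⊆ (F i).neighborSet w \ {v} := by
        intro u hu
        rw [Finset.coe_erase] at hu
        obtain ⟨hu1, hu2⟩ := hu
        have := childrenF_subset (F := F) (i := i) (v := w) hu1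
        exact ⟨this, hu2⟩
      have h1 := card_le_of_subset_set hsubw
      have h2 : ((F i).neighborSet w \ ({v} : Set V)).ncard
          = ((F i).neighborSet w).ncard - 1 :=
        Set.ncard_diff_singleton_of_mem hvw.symm
      have := hd w
      omega
    calc (Ri F i v).card ≤ (insert w (childrenF F i v ∪ (childrenF F i w).erase v)).card :=
          Finset.card_le_card hsub
      _ ≤ (childrenF F i v ∪ (childrenF F i w).erase v).card + 1 := Finset.card_insert_le _ _
      _ ≤ ((childrenF F i v).card + ((childrenF F i w).erase v).card) + 1 := by
          have := Finset.card_union_le (childrenF F i v) ((childrenF F i w).erase v)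
          omega
      _ ≤ 2 * d - 1 := by omega

lemma dep_bound {F : Fin m → SimpleGraph V} {v : V} {d : ℕ}
    (hd : ∀ i w, ((F i).neighborSet w).ncard ≤ d) (hd1 : 1 ≤ d) :
    (Finset.univ.filter
        (fun u => u ≠ v ∧ ¬ Disjoint (vblF F v) (vblF F u))).card ≤ m * (2 * d - 1) := by
  have hsub : Finset.univ.filter (fun u => u ≠ v ∧ ¬ Disjoint (vblF F v) (vblF F u))
      ⊆ Finset.univ.biUnion (fun i => Ri F i v) := by
    intro u hu
    simp only [Finset.mem_filter, Finset.mem_univ, true_and] at hu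
    obtain ⟨hne, hnd⟩ := hu
    obtain ⟨c, hcv, hcu⟩ := Finset.not_disjoint_iff.mp hnd
    simp only [vblF, Finset.mem_biUnion, Finset.mem_univ, true_and] at hcv hcu
    obtain ⟨i, hci⟩ := hcv
    obtain ⟨j, hcj⟩ := hcu
    have hij : i = j := (mem_Tvi_snd hci).symm.trans (mem_Tvi_snd hcj)
    subst hij
    refine Finset.mem_biUnion.mpr ⟨i, Finset.mem_univ i, ?_⟩
    simp only [Ri, Finset.mem_filter, Finset.mem_univ, true_and]
    exact ⟨hne, Finset.not_disjoint_iff.mpr ⟨c, hci, hcj⟩⟩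
  calc (Finset.univ.filter
        (fun u => u ≠ v ∧ ¬ Disjoint (vblF F v) (vblF F u))).card
      ≤ (Finset.univ.biUnion (fun i => Ri F i v)).card := Finset.card_le_card hsub
    _ ≤ ∑ i : Fin m, (Ri F i v).card := Finset.card_biUnion_le
    _ ≤ ∑ _i : Fin m, (2 * d - 1) := Finset.sum_le_sum (fun i _ => Ri_card_le (hd i) hd1)
    _ = m * (2 * d - 1) := by simp [Finset.sum_const, Finset.card_univ, mul_comm]

end Dep

/-- `(1 - 1/n)^(n-1) ≥ 1/e`. -/
lemma one_sub_inv_pow_ge {n : ℕ} (hn : 2 ≤ n) :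
    (Real.exp 1)⁻¹ ≤ (1 - 1/(n:ℝ)) ^ (n - 1) := by
  have hk1 : 1 ≤ n - 1 := by omega
  set k := n - 1 with hkdef
  have hkpos : (0:ℝ) < (k:ℝ) := by exact_mod_cast hk1
  have hnk : (n:ℝ) = (k:ℝ) + 1 := by
    have : n = k + 1 := by omega
    exact_mod_cast this
  have ha : (1 + 1/(k:ℝ)) ≤ Real.exp (1/(k:ℝ)) := by
    have := Real.add_one_le_exp (1/(k:ℝ))
    linarith
  have hbase : (0:ℝ) ≤ 1 + 1/(k:ℝ) := by positivity
  have hpow : (1 + 1/(k:ℝ))^k ≤ (Real.exp (1/(k:ℝ)))^k := pow_le_pow_left₀ hbase ha k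
  have hexp : (Real.exp (1/(k:ℝ)))^k = Real.exp 1 := by
    rw [← Real.exp_nat_mul]
    congr 1
    field_simp
  rw [hexp] at hpow
  have h1n : 1 - 1/(n:ℝ) = (1 + 1/(k:ℝ))⁻¹ := by
    rw [hnk]
    field_simp
    ring
  rw [h1n, inv_pow]
  have hppos : (0:ℝ) < (1 + 1/(k:ℝ))^k := by positivity
  exact inv_anti₀ hppos hpow

end CoopLLL

open CoopLLL in
/-- If `e · 2md · (3/4)^m ≤ 1`, then every `m` forests of maximum degree at
most `d` on a common finite vertex set have a cooperative coloring. -/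
theorem coop_coloring_of_forests_lll (m d : ℕ) (hm : 1 ≤ m) (hd : 1 ≤ d)
    (h : Real.exp 1 * (2 * m * d) * (3 / 4 : ℝ) ^ m ≤ 1)
    (V : Type*) [Fintype V] (F : Fin m → SimpleGraph V)
    (hacyc : ∀ i, (F i).IsAcyclic) (hdeg : ∀ i, maxDeg (F i) ≤ d) :
    HasCoopColoring F := by
  classical
  set n := 2 * m * d with hn
  have hn2 : 2 ≤ n := by
    have h2 : 2 * 1 * 1 ≤ 2 * m * d := Nat.mul_le_mul (Nat.mul_le_mul (le_refl 2) hm) hd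
    omega
  have hnpos : (0:ℝ) < (n:ℝ) := by
    have : 0 < n := by omega
    exact_mod_cast this
  set x : ℝ := 1 / (n:ℝ) with hx
  have hx0 : 0 < x := by rw [hx]; positivity
  have hx1 : x < 1 := by
    rw [hx]
    rw [div_lt_one hnpos]
    have : 1 < n := by omega
    exact_mod_cast this
  set D := n - 1 with hD
  have hdeg' : ∀ i w, ((F i).neighborSet w).ncard ≤ d := by
    intro i w
    have hi := hdeg i
    unfold maxDeg at hi
    exact le_trans
      (Finset.le_sup (f := fun v => ((F i).neighborSet v).ncard) (Finset.mem_univ w)) hi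
  -- probability bound
  have hq : (3/4:ℝ)^m ≤ x * (1-x)^D := by
    have hepos := Real.exp_pos 1
    have h1 : (3/4:ℝ)^m ≤ 1 / (Real.exp 1 * n) := by
      rw [le_div_iff₀ (by positivity)]
      have hcast : ((n:ℕ):ℝ) = 2 * (m:ℝ) * (d:ℝ) := by
        rw [hn]; push_cast; ring
      rw [hcast]
      nlinarith [h]
    have h2 : (Real.exp 1)⁻¹ ≤ (1 - x)^D := by
      rw [hx, hD]
      exact one_sub_inv_pow_ge hn2
    calc (3/4:ℝ)^m ≤ 1 / (Real.exp 1 * n) := h1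
      _ = x * (Real.exp 1)⁻¹ := by rw [hx]; field_simp
      _ ≤ x * (1-x)^D := mul_le_mul_of_nonneg_left h2 (le_of_lt hx0)
  have hcard : ∀ v : V, ((Abad F v).card : ℝ)
      ≤ x * (1-x)^D * Fintype.card (V × Fin m → Bool) := by
    intro v
    refine le_trans (card_Abad_le F v) ?_
    apply mul_le_mul_of_nonneg_right hq
    positivity
  have hdepD : ∀ v : V, (Finset.univ.filter
      (fun u => u ≠ v ∧ ¬ Disjoint (vblF F v) (vblF F u))).card ≤ D := by
    intro v
    refine le_trans (dep_bound hdeg' hd) ?_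
    rw [hD, hn]
    have key : m * (2 * d - 1) + m = 2 * m * d := by
      cases d with
      | zero => omega
      | succ d' =>
        have h21 : 2 * (d' + 1) - 1 = 2 * d' + 1 := by omega
        rw [h21]
        ring
    omega
  obtain ⟨b, hb⟩ := lll_exists (A := Abad F) (vbl := vblF F)
    (fun v => detBy_Abad) hx0 hx1 hcard hdepD
  refine ⟨fun i => {v | covP F i v b}, ?_, ?_⟩
  · intro i u hu w hw hadj
    rcases gparent_total (F i) (hacyc i) hadj with hp | hp
    · have h1 : b (w, i) = false := hu.2 w hp
      have h2 : b (w, i) = true := hw.1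
      rw [h1] at h2; exact Bool.false_ne_true h2
    · have h1 : b (u, i) = false := hw.2 u hp
      have h2 : b (u, i) = true := hu.1
      rw [h1] at h2; exact Bool.false_ne_true h2
  · ext v
    simp only [Set.mem_iUnion, Set.mem_setOf_eq, Set.mem_univ, iff_true]
    have hv := hb v
    rw [Abad, mem_Ev] at hv
    push_neg at hv
    exact hv
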